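/- Let Δ be a probabilistic one-counter automaton with control states Q, |Q| = k. For all control states p, q and all m, n ∈ ℕ: if pXᵐZ ∼ qXⁿZ in S(Δ), then dist(pXᵐZ) = dist(qXⁿZ). -/

import Mathlib

open scoped ENNReal

noncomputable section

/-- A probabilistic labelled transition system (pLTS): states `S`, alphabet `A`,
and a transition relation into probability distributions (`PMF`s) on `S`. -/
structure PLTS (S : Type) (A : Type) where
  Tr : S → A → PMF S → Prop

namespace PLTS

variable {S A : Type}

/-- The mass that a distribution assigns to a set of states. -/
def mass (d : PMF S) (E : Set S) : ℝ≥0∞ := ∑' s : E, d s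

/-- Two distributions are `r`-equivalent if they assign equal mass to every
`r`-equivalence class (for an equivalence `r`, the classes are the sets `{t | r s t}`). -/
def REquiv (r : S → S → Prop) (d d' : PMF S) : Prop :=
  ∀ s : S, mass d {t | r s t} = mass d' {t | r s t}

/-- An equivalence relation is a bisimulation if related states can match
each other's transitions with `r`-equivalent target distributions. -/
def IsBisimulation (L : PLTS S A) (r : S → S → Prop) : Prop :=
  Equivalence r ∧
    ∀ s t, r s t → ∀ a d, L.Tr s a d → ∃ d', L.Tr t a d' ∧ REquiv r d d'

/-- Bisimilarity: the union of all bisimulation relations. -/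
def Bisim (L : PLTS S A) (s t : S) : Prop :=
  ∃ r, L.IsBisimulation r ∧ r s t

/-- The bisimulation approximants `∼ₙ`. -/
def approx (L : PLTS S A) : ℕ → S → S → Prop
  | 0 => fun _ _ => True
  | n + 1 => fun s t =>
      (∀ a d, L.Tr s a d → ∃ d', L.Tr t a d' ∧ REquiv (L.approx n) d d') ∧
      (∀ a d', L.Tr t a d' → ∃ d, L.Tr s a d ∧ REquiv (L.approx n) d d')

/-- A pLTS is finitely branching if every state has finitely many transitions. -/
def FinBranching (L : PLTS S A) : Prop :=
  ∀ s, {p : A × PMF S | L.Tr s p.1 p.2}.Finite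

/-- One-step successor relation: `s → s'` iff some transition of `s` gives `s'`
positive probability. -/
def Step (L : PLTS S A) (s s' : S) : Prop :=
  ∃ a d, L.Tr s a d ∧ d s' ≠ 0

end PLTS

/-- The rules of a probabilistic pushdown automaton (pPDA) with control states
`Q`, stack alphabet `Γ`, input alphabet `A`: a rule `qX –a↪ d` is a tuple
`(q, X, a, d)` where `d` is a distribution over pairs of a control state and
a string of length at most two that replaces the top symbol. -/
def PPDARules (Q Γ A : Type) := Q → Γ → A → PMF (Q × List Γ) → Prop

/-- Well-formedness of pPDA rules: target distributions are supported on
configurations `(p, α)` with `|α| ≤ 2` (i.e. `α ∈ Γ^{≤2}`). -/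
def PPDAWf {Q Γ A : Type} (Δ : PPDARules Q Γ A) : Prop :=
  ∀ q X a d, Δ q X a d → ∀ p (α : List Γ), d (p, α) ≠ 0 → α.length ≤ 2

/-- A nondeterministic PDA is a pPDA all of whose rules use Dirac distributions. -/
def IsPDA {Q Γ A : Type} (Δ : PPDARules Q Γ A) : Prop :=
  ∀ q X a d, Δ q X a d → ∃ c, d = PMF.pure c

/-- The pLTS induced by a pPDA on configurations `Q × Γ*`: a rule `qX –a↪ d`
and a tail `β ∈ Γ*` induce the transition `qXβ –a→ d'` with `d'(pαβ) = d(pα)`;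
configurations with empty stack have no transitions. -/
def PPDARules.plts {Q Γ A : Type} (Δ : PPDARules Q Γ A) : PLTS (Q × List Γ) A where
  Tr := fun c a d' => ∃ (q : Q) (X : Γ) (β : List Γ) (d : PMF (Q × List Γ)),
    c = (q, X :: β) ∧ Δ q X a d ∧ d' = d.map (fun pα => (pα.1, pα.2 ++ β))

/-- The stack alphabet `{X, Z}` of a one-counter automaton. -/
inductive OCSym : Type
  | X : OCSym
  | Z : OCSym
deriving DecidableEq

/-- Well-formedness of pOCA rules: `Z` always and only occurs at the bottom of
the stack, i.e. rules for top `X` rewrite `X` into `ε`, `X` or `XX`, and rules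
for top `Z` rewrite `Z` into `Z` or `XZ`. -/
def POCAWf {Q A : Type} (Δ : PPDARules Q OCSym A) : Prop :=
  (∀ q a d, Δ q OCSym.X a d → ∀ p (α : List OCSym), d (p, α) ≠ 0 →
      α = [] ∨ α = [OCSym.X] ∨ α = [OCSym.X, OCSym.X]) ∧
  (∀ q a d, Δ q OCSym.Z a d → ∀ p (α : List OCSym), d (p, α) ≠ 0 →
      α = [OCSym.Z] ∨ α = [OCSym.X, OCSym.Z])

/-- The configuration `pXᵐZ` of a pOCA. -/
def oconf {Q : Type} (p : Q) (m : ℕ) : Q × List OCSym :=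
  (p, List.replicate m OCSym.X ++ [OCSym.Z])

/-- The finite pLTS `ℱ_Δ` underlying a pOCA: `p –a→ d'` iff there is a rule
`pX –a↪ d` with `d'(q) = d(q,ε) + d(q,X) + d(q,XX)` for all `q`. -/
def underlying {Q A : Type} (Δ : PPDARules Q OCSym A) : PLTS Q A where
  Tr := fun p a d' => ∃ d, Δ p OCSym.X a d ∧
    ∀ q : Q, d' q = d (q, []) + d (q, [OCSym.X]) + d (q, [OCSym.X, OCSym.X])

/-- The disjoint-union pLTS of two pLTSs over the same alphabet. -/
def PLTS.sum {S₁ S₂ A : Type} (L₁ : PLTS S₁ A) (L₂ : PLTS S₂ A) :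
    PLTS (S₁ ⊕ S₂) A where
  Tr := fun s a d =>
    (∃ s₁ d₁, s = Sum.inl s₁ ∧ L₁.Tr s₁ a d₁ ∧ d = d₁.map Sum.inl) ∨
    (∃ s₂ d₂, s = Sum.inr s₂ ∧ L₂.Tr s₂ a d₂ ∧ d = d₂.map Sum.inr)

/-- `INC`: configurations `pXᵐZ` that are not related by the `k`-th
approximant (`k = |Q|`) to any state `q` of the underlying finite pLTS, in the
disjoint union of `S(Δ)` and `ℱ_Δ`. -/
def InINC {Q A : Type} [Fintype Q] (Δ : PPDARules Q OCSym A)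
    (p : Q) (m : ℕ) : Prop :=
  ∀ q : Q, ¬ (Δ.plts.sum (underlying Δ)).approx (Fintype.card Q)
      (Sum.inl (oconf p m)) (Sum.inr q)

/-- `ℓ` one-step successor moves lead from `s` to `t`. -/
def PLTS.StepN {S A : Type} (L : PLTS S A) : ℕ → S → S → Prop
  | 0, s, t => s = t
  | n + 1, s, t => ∃ u, L.Step s u ∧ L.StepN n u t

/-- `dist(c)`: the least number of one-step successor moves in `S(Δ)` leading
from the configuration `c` to some configuration in `INC` (and `∞ = ⊤` if
`INC` is unreachable). -/
def distINC {Q A : Type} [Fintype Q] (Δ : PPDARules Q OCSym A)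
    (c : Q × List OCSym) : ℕ∞ :=
  sInf {n : ℕ∞ | ∃ ℓ : ℕ, n = (ℓ : ℕ∞) ∧
    ∃ (p : Q) (m : ℕ), Δ.plts.StepN ℓ c (oconf p m) ∧ InINC Δ p m}


set_option linter.constructorNameAsVariable false

namespace PLTS

variable {S A : Type}


lemma mass_eq_outer (d : PMF S) (E : Set S) : mass d E = d.toOuterMeasure E := by
  rw [PMF.toOuterMeasure_apply, mass, tsum_subtype]

lemma mass_map {T : Type} (f : S → T) (d : PMF S) (B : Set T) :
    mass (d.map f) B = d.toOuterMeasure (f ⁻¹' B) := by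
  rw [mass_eq_outer, PMF.toOuterMeasure_map_apply]

lemma REquiv.refl (r : S → S → Prop) (d : PMF S) : REquiv r d d := fun _ => rfl
lemma REquiv.symm {r : S → S → Prop} {d d' : PMF S} (h : REquiv r d d') :
    REquiv r d' d := fun s => (h s).symm
lemma REquiv.trans {r : S → S → Prop} {d d' d'' : PMF S} (h : REquiv r d d')
    (h' : REquiv r d' d'') : REquiv r d d'' := fun s => (h s).trans (h' s)

/-- mass equality transfers from classes to r-closed sets. -/
lemma REquiv.mass_closed {r : S → S → Prop} (hr : Equivalence r) {d d' : PMF S}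
    (h : REquiv r d d') {E : Set S} (hE : ∀ u v, u ∈ E → r u v → v ∈ E) :
    mass d E = mass d' E := by
  letI st : Setoid S := ⟨r, hr⟩
  set f : S → Quotient st := Quotient.mk st with hf
  have hpre : ∀ b : Quotient st, ∃ s : S, f ⁻¹' {b} = {t | r s t} := by
    intro b
    obtain ⟨s, rfl⟩ := Quotient.exists_rep b
    exact ⟨s, Set.ext fun t => by
      simp only [Set.mem_preimage, Set.mem_singleton_iff, hf, Quotient.eq, Set.mem_setOf_eq]
      exact ⟨fun hh => hr.symm hh, fun hh => hr.symm hh⟩⟩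
  have hmap : d.map f = d'.map f := by
    ext b
    obtain ⟨s, hs⟩ := hpre b
    have h1 : (d.map f) b = mass d {t | r s t} := by
      rw [← PMF.toOuterMeasure_apply_singleton, PMF.toOuterMeasure_map_apply, hs,
        mass_eq_outer]
    have h2 : (d'.map f) b = mass d' {t | r s t} := by
      rw [← PMF.toOuterMeasure_apply_singleton, PMF.toOuterMeasure_map_apply, hs,
        mass_eq_outer]
    rw [h1, h2, h s]
  have hEq : E = f ⁻¹' (f '' E) := by
    apply Set.Subset.antisymm (Set.subset_preimage_image f E)
    rintro x ⟨e, he, hfe⟩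
    have hxe : r x e := Quotient.eq.mp hfe.symm
    exact hE e x he (hr.symm hxe)
  calc mass d E = mass (d.map f) (f '' E) := by rw [mass_map, ← hEq, mass_eq_outer]
    _ = mass (d'.map f) (f '' E) := by rw [hmap]
    _ = mass d' E := by rw [mass_map, ← hEq, mass_eq_outer]

lemma approx_refl (L : PLTS S A) : ∀ n s, L.approx n s s := by
  intro n
  cases n with
  | zero => intro s; trivial
  | succ n => exact fun s => ⟨fun a d hd => ⟨d, hd, REquiv.refl _ _⟩,
      fun a d hd => ⟨d, hd, REquiv.refl _ _⟩⟩

lemma approx_symm (L : PLTS S A) : ∀ n s t, L.approx n s t → L.approx n t s := by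
  intro n
  cases n with
  | zero => intros; trivial
  | succ n =>
    rintro s t ⟨h1, h2⟩
    exact ⟨fun a d hd => (h2 a d hd).imp fun d' ⟨hd', he⟩ => ⟨hd', he.symm⟩,
      fun a d hd => (h1 a d hd).imp fun d' ⟨hd', he⟩ => ⟨hd', he.symm⟩⟩

lemma approx_trans (L : PLTS S A) : ∀ n s t u, L.approx n s t → L.approx n t u →
    L.approx n s u := by
  intro n
  cases n with
  | zero => intros; trivial
  | succ n =>
    rintro s t u ⟨h1, h2⟩ ⟨g1, g2⟩
    constructor
    · intro a d hd
      obtain ⟨d', hd', he⟩ := h1 a d hd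
      obtain ⟨d'', hd'', he'⟩ := g1 a d' hd'
      exact ⟨d'', hd'', he.trans he'⟩
    · intro a d hd
      obtain ⟨d', hd', he⟩ := g2 a d hd
      obtain ⟨d'', hd'', he'⟩ := h2 a d' hd'
      exact ⟨d'', hd'', he'.trans he⟩

lemma approx_equiv (L : PLTS S A) (n : ℕ) : Equivalence (L.approx n) :=
  ⟨L.approx_refl n, fun h => L.approx_symm n _ _ h, fun h h' => L.approx_trans n _ _ _ h h'⟩

lemma IsBisimulation.le_approx {L : PLTS S A} {r : S → S → Prop}
    (hb : L.IsBisimulation r) : ∀ n s t, r s t → L.approx n s t := by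
  intro n
  induction n with
  | zero => intros; trivial
  | succ n ih =>
    intro s t hst
    have key : ∀ d d' : PMF S, REquiv r d d' → REquiv (L.approx n) d d' := by
      intro d d' he s₀
      refine he.mass_closed hb.1 ?_
      intro u v hu huv
      exact L.approx_trans n s₀ u v hu (ih u v huv)
    constructor
    · intro a d hd
      obtain ⟨d', hd', he⟩ := hb.2 s t hst a d hd
      exact ⟨d', hd', key d d' he⟩
    · intro a d' hd'
      obtain ⟨d, hd, he⟩ := hb.2 t s (hb.1.symm hst) a d' hd'
      exact ⟨d, hd, (key d' d he).symm⟩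

lemma Bisim.approx {L : PLTS S A} {s t : S} (h : L.Bisim s t) (n : ℕ) :
    L.approx n s t := by
  obtain ⟨r, hr, hst⟩ := h
  exact hr.le_approx n s t hst

lemma Bisim.symm {L : PLTS S A} {s t : S} (h : L.Bisim s t) : L.Bisim t s := by
  obtain ⟨r, hr, hst⟩ := h
  exact ⟨r, hr, hr.1.symm hst⟩

/-- bisimilar states can match steps with bisimilar successors -/
lemma Bisim.step {L : PLTS S A} {s t u : S} (h : L.Bisim s t) (hs : L.Step s u) :
    ∃ u', L.Step t u' ∧ L.Bisim u u' := by
  obtain ⟨r, hr, hst⟩ := h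
  obtain ⟨a, d, hd, hu⟩ := hs
  obtain ⟨d', hd', he⟩ := hr.2 s t hst a d hd
  have hpos : mass d' {v | r u v} ≠ 0 := by
    rw [← he u]
    intro h0
    apply hu
    have hle : d u ≤ mass d {v | r u v} :=
      ENNReal.le_tsum (⟨u, hr.1.refl u⟩ : {v | r u v})
    exact le_antisymm (h0 ▸ hle) zero_le
  have hex : ∃ u' : {v | r u v}, d' u' ≠ 0 := by
    by_contra hc
    push_neg at hc
    exact hpos (ENNReal.tsum_eq_zero.mpr hc)
  obtain ⟨⟨u', hu'⟩, hdu'⟩ := hex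
  exact ⟨u', ⟨a, d', hd', hdu'⟩, ⟨r, hr, hu'⟩⟩

end PLTS

namespace PLTS

variable {S S₂ A : Type}

lemma Bisim.stepN {L : PLTS S A} : ∀ (ℓ : ℕ) {s t u : S}, L.Bisim s t →
    L.StepN ℓ s u → ∃ u', L.StepN ℓ t u' ∧ L.Bisim u u' := by
  intro ℓ
  induction ℓ with
  | zero => rintro s t u h rfl; exact ⟨t, rfl, h⟩
  | succ ℓ ih =>
    rintro s t u h ⟨v, hv, hvu⟩
    obtain ⟨v', hv', hbv⟩ := h.step hv
    obtain ⟨u', hu', hbu⟩ := ih hbv hvu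
    exact ⟨u', ⟨v', hv', hu'⟩, hbu⟩

/-- bisimilarity lifts from a component to the disjoint union. -/
lemma Bisim.sum_inl {L₁ : PLTS S A} {L₂ : PLTS S₂ A} {s t : S}
    (h : L₁.Bisim s t) : (L₁.sum L₂).Bisim (Sum.inl s) (Sum.inl t) := by
  obtain ⟨r, hr, hst⟩ := h
  refine ⟨fun x y => (∃ u v, x = Sum.inl u ∧ y = Sum.inl v ∧ r u v) ∨ x = y,
    ⟨⟨fun x => Or.inr rfl, ?_, ?_⟩, ?_⟩, Or.inl ⟨s, t, rfl, rfl, hst⟩⟩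
  · rintro x y (⟨u, v, rfl, rfl, huv⟩ | rfl)
    · exact Or.inl ⟨v, u, rfl, rfl, hr.1.symm huv⟩
    · exact Or.inr rfl
  · rintro x y z (⟨u, v, rfl, rfl, huv⟩ | rfl) hyz
    · rcases hyz with ⟨v', w, hv', rfl, hvw⟩ | rfl
      · cases hv'
        exact Or.inl ⟨u, w, rfl, rfl, hr.1.trans huv hvw⟩
      · exact Or.inl ⟨u, v, rfl, rfl, huv⟩
    · exact hyz
  · rintro x y (⟨u, v, rfl, rfl, huv⟩ | rfl) a d hd
    swap
    · exact ⟨d, hd, REquiv.refl _ _⟩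
    rcases hd with ⟨s₁, d₁, hs₁, hTr, rfl⟩ | ⟨s₂, d₂, hs₂, _, _⟩
    swap
    · exact absurd hs₂ (by simp)
    obtain rfl : s₁ = u := Sum.inl_injective hs₁.symm
    obtain ⟨d₁', hTr', he⟩ := hr.2 s₁ v huv a d₁ hTr
    refine ⟨d₁'.map Sum.inl, Or.inl ⟨v, d₁', rfl, hTr', rfl⟩, ?_⟩
    intro s₀
    rw [mass_map, mass_map]
    cases s₀ with
    | inl w =>
      have hset : (Sum.inl ⁻¹' {y | (∃ u v, (Sum.inl w : S ⊕ S₂) = Sum.inl u ∧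
          y = Sum.inl v ∧ r u v) ∨ (Sum.inl w : S ⊕ S₂) = y}) = {v | r w v} := by
        ext v'
        simp only [Set.mem_preimage, Set.mem_setOf_eq, Sum.inl.injEq]
        constructor
        · rintro (⟨u', v'', hu', hv', huv'⟩ | h)
          · exact hu' ▸ hv' ▸ huv'
          · exact h ▸ hr.1.refl w
        · intro hwv; exact Or.inl ⟨w, v', rfl, rfl, hwv⟩
      rw [hset, ← mass_eq_outer, ← mass_eq_outer]
      exact he w
    | inr z =>
      have hset : ∀ (d0 : PMF S), d0.toOuterMeasure (Sum.inl ⁻¹'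
          {y | (∃ u v, (Sum.inr z : S ⊕ S₂) = Sum.inl u ∧ y = Sum.inl v ∧ r u v) ∨
            (Sum.inr z : S ⊕ S₂) = y}) = d0.toOuterMeasure (∅ : Set S) := by
        intro d0; congr 1
        ext v'
        simp
      rw [hset, hset, ← mass_eq_outer, ← mass_eq_outer]
      simp [mass]

end PLTS

variable {Q A : Type}

lemma step_oconf (Δ : PPDARules Q OCSym A) (hwf : POCAWf Δ)
    {p : Q} {m : ℕ} {u : Q × List OCSym} (h : Δ.plts.Step (oconf p m) u) :
    ∃ p' m', u = oconf p' m' := by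
  obtain ⟨a, d', ⟨q, X, β, d, hc, hΔ, rfl⟩, hu⟩ := h
  have hu' : u ∈ (d.map (fun pα => (pα.1, pα.2 ++ β))).support := hu
  rw [PMF.support_map] at hu'
  obtain ⟨⟨p₀, α⟩, hmem, rfl⟩ := hu'
  have hmem' : d (p₀, α) ≠ 0 := hmem
  cases m with
  | zero =>
    have hc' : (p, [OCSym.Z]) = (q, X :: β) := hc
    obtain ⟨rfl, hl⟩ := Prod.mk.injEq .. ▸ hc'
    obtain ⟨rfl, rfl⟩ : OCSym.Z = X ∧ ([] : List OCSym) = β := by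
      cases hl; exact ⟨rfl, rfl⟩
    rcases hwf.2 p a d hΔ p₀ α hmem' with rfl | rfl
    · exact ⟨p₀, 0, by simp [oconf]⟩
    · exact ⟨p₀, 1, by simp [oconf]⟩
  | succ m₀ =>
    have hc' : (p, OCSym.X :: (List.replicate m₀ OCSym.X ++ [OCSym.Z])) = (q, X :: β) := by
      simpa [oconf, List.replicate_succ] using hc
    obtain ⟨rfl, hl⟩ := Prod.mk.injEq .. ▸ hc'
    obtain ⟨rfl, rfl⟩ : OCSym.X = X ∧ List.replicate m₀ OCSym.X ++ [OCSym.Z] = β := by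
      cases hl; exact ⟨rfl, rfl⟩
    rcases hwf.1 p a d hΔ p₀ α hmem' with rfl | rfl | rfl
    · exact ⟨p₀, m₀, by simp [oconf]⟩
    · exact ⟨p₀, m₀ + 1, by simp [oconf, List.replicate_succ]⟩
    · exact ⟨p₀, m₀ + 2, by simp [oconf, List.replicate_succ]⟩

lemma stepN_oconf (Δ : PPDARules Q OCSym A) (hwf : POCAWf Δ) :
    ∀ (ℓ : ℕ) {p : Q} {m : ℕ} {u : Q × List OCSym},
      Δ.plts.StepN ℓ (oconf p m) u → ∃ p' m', u = oconf p' m' := by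
  intro ℓ
  induction ℓ with
  | zero => rintro p m u rfl; exact ⟨p, m, rfl⟩
  | succ ℓ ih =>
    rintro p m u ⟨v, hv, hvu⟩
    obtain ⟨p', m', rfl⟩ := step_oconf Δ hwf hv
    exact ih hvu

lemma InINC_bisim [Fintype Q] (Δ : PPDARules Q OCSym A)
    {p p' : Q} {m m' : ℕ} (h : Δ.plts.Bisim (oconf p m) (oconf p' m'))
    (hi : InINC Δ p m) : InINC Δ p' m' := by
  intro q hq
  have h1 : (Δ.plts.sum (underlying Δ)).approx (Fintype.card Q)
      (Sum.inl (oconf p m)) (Sum.inl (oconf p' m')) :=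
    (h.sum_inl (L₂ := underlying Δ)).approx (Fintype.card Q)
  exact hi q ((Δ.plts.sum (underlying Δ)).approx_trans (Fintype.card Q) _ _ _ h1 hq)

lemma distINC_le [Fintype Q] (Δ : PPDARules Q OCSym A) (hwf : POCAWf Δ)
    {p q : Q} {m n : ℕ} (h : Δ.plts.Bisim (oconf p m) (oconf q n)) :
    distINC Δ (oconf q n) ≤ distINC Δ (oconf p m) := by
  apply sInf_le_sInf
  rintro x ⟨ℓ, rfl, p', m', hstep, hinc⟩
  obtain ⟨t', hstep', hb⟩ := h.stepN ℓ hstep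
  obtain ⟨p'', m'', rfl⟩ := stepN_oconf Δ hwf ℓ hstep'
  exact ⟨ℓ, rfl, p'', m'', hstep', InINC_bisim Δ hb hinc⟩

/-- For a pOCA `Δ`: bisimilar configurations have the same
distance to `INC`: if `pXᵐZ ∼ qXⁿZ` in `S(Δ)` then
`dist(pXᵐZ) = dist(qXⁿZ)`. -/
theorem bisim_distINC_eq (Q A : Type) [Fintype Q] [Fintype A]
    (Δ : PPDARules Q OCSym A) (hwf : POCAWf Δ) (p q : Q) (m n : ℕ)
    (h : Δ.plts.Bisim (oconf p m) (oconf q n)) :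
    distINC Δ (oconf p m) = distINC Δ (oconf q n) := by
  exact le_antisymm (distINC_le Δ hwf h.symm) (distINC_le Δ hwf h)
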